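/- For every integer n ≥ 3, the graph I_{⌊n/2⌋}(C_n), where ⌊n/2⌋ is the independence number of the cycle C_n on n vertices, is not Hamiltonian. -/

import Mathlib

/-- A finset of vertices is independent if no two of its members are adjacent. -/
def IsIndep {V : Type*} (G : SimpleGraph V) (s : Finset V) : Prop :=
  ∀ u ∈ s, ∀ v ∈ s, ¬ G.Adj u v

/-- The `k`-independent graph of `G`: vertices are the independent sets of cardinality at most
`k`, two of them adjacent iff one is obtained from the other by adding a single vertex. -/
def indepGraph {V : Type*} (G : SimpleGraph V) (k : ℕ) :
    SimpleGraph {s : Finset V // IsIndep G s ∧ s.card ≤ k} where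
  Adj A B := (A.1 ⊆ B.1 ∧ B.1.card = A.1.card + 1) ∨ (B.1 ⊆ A.1 ∧ A.1.card = B.1.card + 1)
  symm := by
    constructor
    rintro A B (⟨h1, h2⟩ | ⟨h1, h2⟩)
    · exact Or.inr ⟨h1, h2⟩
    · exact Or.inl ⟨h1, h2⟩
  loopless := by
    constructor
    rintro A (⟨_, h⟩ | ⟨_, h⟩) <;> omega

noncomputable instance {V : Type*} [Fintype V] (G : SimpleGraph V) (k : ℕ) :
    Fintype {s : Finset V // IsIndep G s ∧ s.card ≤ k} :=
  Fintype.ofFinite _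

open Finset

/-- path-independence for finsets of naturals: no two consecutive. -/
def PIndepN (s : Finset ℕ) : Prop := ∀ a ∈ s, a + 1 ∉ s

instance : DecidablePred PIndepN := fun s => by unfold PIndepN; infer_instance

lemma PIndepN.mono {s t : Finset ℕ} (h : t ⊆ s) (hs : PIndepN s) : PIndepN t :=
  fun a ha hb => hs a (h ha) (h hb)

noncomputable def FeN (s : Finset ℕ) : ℤ := if PIndepN s then (-1) ^ s.card else 0

noncomputable def PsumN (m : ℕ) : ℤ := ∑ s ∈ (range m).powerset, FeN s

lemma psumN_zero : PsumN 0 = 1 := by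
  simp [PsumN, FeN, PIndepN]

lemma psumN_succ (k : ℕ) :
    PsumN (k + 1) = PsumN k + ∑ t ∈ (range k).powerset, FeN (insert k t) := by
  rw [PsumN, range_add_one, Finset.sum_powerset_insert notMem_range_self, PsumN]

lemma feN_insert {k : ℕ} {t : Finset ℕ} (ht : t ⊆ range (k + 1)) :
    FeN (insert (k + 1) t) = if k ∉ t then -FeN t else 0 := by
  have hk1 : k + 1 ∉ t := fun h => by simpa using ht h
  by_cases hk : k ∈ t
  · have : ¬ PIndepN (insert (k + 1) t) := fun h =>
      h k (mem_insert_of_mem hk) (mem_insert_self _ _)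
    simp [FeN, this, hk]
  · by_cases hP : PIndepN t
    · have hPi : PIndepN (insert (k + 1) t) := by
        intro a ha hb
        rcases mem_insert.1 ha with rfl | ha
        · rcases mem_insert.1 hb with h | h
          · omega
          · have := mem_range.1 (ht h); omega
        · rcases mem_insert.1 hb with h | h
          · have : a = k := by omega
            exact hk (this ▸ ha)
          · exact hP a ha h
      simp only [FeN, if_pos hPi, if_pos hP, if_pos hk]
      rw [card_insert_of_notMem hk1, pow_succ]
      ring
    · have : ¬ PIndepN (insert (k + 1) t) := fun h => hP (h.mono (subset_insert _ _))
      simp [FeN, this, hP, hk]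

lemma psumN_one : PsumN 1 = 0 := by
  rw [psumN_succ 0]
  simp [psumN_zero, FeN, PIndepN]

lemma psumN_rec (k : ℕ) : PsumN (k + 2) = PsumN (k + 1) - PsumN k := by
  rw [psumN_succ (k + 1)]
  have h1 : ∑ t ∈ (range (k + 1)).powerset, FeN (insert (k + 1) t)
      = ∑ t ∈ (range (k + 1)).powerset, (if k ∉ t then -FeN t else 0) :=
    Finset.sum_congr rfl fun t ht => feN_insert (mem_powerset.1 ht)
  have h2 : ((range (k + 1)).powerset).filter (fun t => k ∉ t) = (range k).powerset := by
    ext t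
    simp only [mem_filter, mem_powerset, range_add_one, subset_insert_iff]
    constructor
    · rintro ⟨h, hk⟩
      rwa [erase_eq_of_notMem hk] at h
    · intro h
      have hk : k ∉ t := fun hkk => by simpa using h hkk
      rw [erase_eq_of_notMem hk]
      exact ⟨h, hk⟩
  rw [h1, ← Finset.sum_filter, h2, Finset.sum_neg_distrib]
  unfold PsumN
  ring

def pvN : ℕ → ℤ
  | 0 => 1
  | 1 => 0
  | 2 => -1
  | 3 => -1
  | 4 => 0
  | _ => 1

lemma psumN_pv : ∀ k, PsumN k = pvN (k % 6) ∧ PsumN (k + 1) = pvN ((k + 1) % 6) := by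
  intro k
  induction k with
  | zero => exact ⟨by simpa [pvN] using psumN_zero, by simpa [pvN] using psumN_one⟩
  | succ k ih =>
    obtain ⟨ih1, ih2⟩ := ih
    refine ⟨ih2, ?_⟩
    rw [psumN_rec, ih1, ih2]
    have e1 : (k + 1) % 6 = (k % 6 + 1) % 6 := by omega
    have e2 : (k + 1 + 1) % 6 = (k % 6 + 2) % 6 := by omega
    rw [e1, e2]
    rcases (by omega : k % 6 = 0 ∨ k % 6 = 1 ∨ k % 6 = 2 ∨ k % 6 = 3 ∨ k % 6 = 4 ∨ k % 6 = 5)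
      with h | h | h | h | h | h <;> rw [h] <;> decide

lemma feN_image_add (c : ℕ) (t : Finset ℕ) : FeN (t.image (· + c)) = FeN t := by
  have hinj : Function.Injective (· + c) := fun a b h => by
    have h' : a + c = b + c := h
    omega
  have hP : PIndepN (t.image (· + c)) ↔ PIndepN t := by
    constructor
    · intro h a ha hb
      exact h (a + c) (mem_image_of_mem _ ha)
        (by have : a + 1 + c = a + c + 1 := by omega
            exact this ▸ mem_image_of_mem _ hb)
    · intro h x hx hy
      obtain ⟨a, ha, rfl⟩ := mem_image.1 hx
      obtain ⟨b, hb, hba⟩ := mem_image.1 hy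
      have hba' : b + c = a + c + 1 := hba
      have : b = a + 1 := by omega
      exact h a ha (this ▸ hb)
  unfold FeN
  rw [Finset.card_image_of_injective _ hinj]
  by_cases h : PIndepN t
  · rw [if_pos (hP.2 h), if_pos h]
  · rw [if_neg (fun hh => h (hP.1 hh)), if_neg h]

lemma shiftN (c m : ℕ) :
    ∑ s ∈ ((range (c + m)).powerset.filter (fun s => ∀ a ∈ s, c ≤ a)), FeN s = PsumN m := by
  rw [PsumN]
  refine (Finset.sum_bij' (fun t _ => t.image (· + c)) (fun s _ => s.image (· - c))
    ?_ ?_ ?_ ?_ ?_).symm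
  · intro t ht
    rw [mem_filter, mem_powerset]
    constructor
    · intro x hx
      obtain ⟨a, ha, rfl⟩ := mem_image.1 hx
      have := mem_range.1 (mem_powerset.1 ht ha)
      exact mem_range.2 (by omega)
    · intro x hx
      obtain ⟨a, _, rfl⟩ := mem_image.1 hx
      omega
  · intro s hs
    rw [mem_filter, mem_powerset] at hs
    rw [mem_powerset]
    intro x hx
    obtain ⟨a, ha, rfl⟩ := mem_image.1 hx
    have h1 := mem_range.1 (hs.1 ha)
    have h2 := hs.2 a ha
    exact mem_range.2 (by omega)
  · intro t _
    rw [Finset.image_image]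
    have : ((fun x => x - c) ∘ (· + c)) = id := by
      funext a; simp
    rw [this, Finset.image_id]
  · intro s hs
    rw [mem_filter] at hs
    rw [Finset.image_image]
    rw [Finset.image_congr (g := id) (fun a ha => by
      have := hs.2 a ha; simp; omega), Finset.image_id]
  · intro t _
    exact (feN_image_add c t).symm

/-- cycle-independence for subsets of `range n`. -/
def CIndepN (n : ℕ) (s : Finset ℕ) : Prop := PIndepN s ∧ ¬(0 ∈ s ∧ n - 1 ∈ s)

instance (n : ℕ) : DecidablePred (CIndepN n) := fun s => by unfold CIndepN; infer_instance

noncomputable def SsumN (n : ℕ) : ℤ :=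
  ∑ s ∈ (range n).powerset.filter (CIndepN n), (-1) ^ s.card

lemma ssumN_eq (n : ℕ) (hn : 3 ≤ n) : SsumN n = PsumN (n - 1) - PsumN (n - 3) := by
  have P1 : ∑ s ∈ (range n).powerset.filter (fun s => CIndepN n s ∧ 0 ∉ s), (-1 : ℤ) ^ s.card
      = PsumN (n - 1) := by
    rw [← shiftN 1 (n - 1), (by omega : 1 + (n - 1) = n)]
    rw [Finset.sum_filter, Finset.sum_filter]
    refine Finset.sum_congr rfl fun s _ => ?_
    by_cases h0 : 0 ∈ s
    · rw [if_neg (by tauto), if_neg (fun h => by have := h 0 h0; omega)]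
    · have h1 : ∀ a ∈ s, 1 ≤ a := fun a ha => by
        rcases Nat.eq_zero_or_pos a with rfl | h
        · exact absurd ha h0
        · exact h
      rw [if_pos h1]
      unfold FeN
      by_cases hP : PIndepN s
      · have hC : CIndepN n s := ⟨hP, fun hc => h0 hc.1⟩
        rw [if_pos ⟨hC, h0⟩, if_pos hP]
      · rw [if_neg (fun h => hP h.1.1), if_neg hP]
  have P2 : ∑ s ∈ (range n).powerset.filter (fun s => CIndepN n s ∧ 0 ∈ s), (-1 : ℤ) ^ s.card
      = -PsumN (n - 3) := by
    rw [← shiftN 2 (n - 3), (by omega : 2 + (n - 3) = n - 1)]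
    have hR : ∑ s ∈ (range (n - 1)).powerset.filter (fun s => ∀ a ∈ s, 2 ≤ a), FeN s
        = ∑ t ∈ (range (n - 1)).powerset.filter (fun t => (∀ a ∈ t, 2 ≤ a) ∧ PIndepN t),
            (-1 : ℤ) ^ t.card := by
      rw [Finset.sum_filter, Finset.sum_filter]
      refine Finset.sum_congr rfl fun t _ => ?_
      unfold FeN
      by_cases h2 : ∀ a ∈ t, 2 ≤ a <;> by_cases hP : PIndepN t <;> simp [h2, hP]
    rw [hR]
    have key : ∑ s ∈ (range n).powerset.filter (fun s => CIndepN n s ∧ 0 ∈ s), (-1 : ℤ) ^ s.card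
        = ∑ t ∈ (range (n - 1)).powerset.filter (fun t => (∀ a ∈ t, 2 ≤ a) ∧ PIndepN t),
            -((-1 : ℤ) ^ t.card) := by
      refine Finset.sum_bij' (fun s _ => s.erase 0) (fun t _ => insert 0 t) ?_ ?_ ?_ ?_ ?_
      · intro s hs
        rw [mem_filter, mem_powerset] at hs
        rw [mem_filter, mem_powerset]
        obtain ⟨hsub, ⟨hP, h01⟩, h0⟩ := hs
        have h1 : 1 ∉ s := hP 0 h0
        have hn1 : n - 1 ∉ s := fun h => h01 ⟨h0, h⟩
        refine ⟨?_, ?_, hP.mono (erase_subset _ _)⟩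
        · intro a ha
          rw [mem_erase] at ha
          have hlt := mem_range.1 (hsub ha.2)
          have hne : a ≠ n - 1 := fun e => hn1 (e ▸ ha.2)
          have := ha.1
          exact mem_range.2 (by omega)
        · intro a ha
          rw [mem_erase] at ha
          have : a ≠ 1 := fun e => h1 (e ▸ ha.2)
          have := ha.1
          omega
      · intro t ht
        rw [mem_filter, mem_powerset] at ht
        rw [mem_filter, mem_powerset]
        obtain ⟨hsub, h2, hP⟩ := ht
        have h0t : 0 ∉ t := fun h => by have := h2 0 h; omega
        have h1t : 1 ∉ t := fun h => by have := h2 1 h; omega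
        have hn1 : n - 1 ∉ t := fun h => by have := mem_range.1 (hsub h); omega
        refine ⟨?_, ⟨?_, ?_⟩, mem_insert_self _ _⟩
        · intro a ha
          rcases mem_insert.1 ha with rfl | ha
          · exact mem_range.2 (by omega)
          · exact mem_range.2 (by have := mem_range.1 (hsub ha); omega)
        · intro a ha hb
          rcases mem_insert.1 ha with rfl | ha
          · rcases mem_insert.1 hb with h | h
            · omega
            · exact h1t h
          · rcases mem_insert.1 hb with h | h
            · omega
            · exact hP a ha h
        · rintro ⟨_, hc⟩
          rcases mem_insert.1 hc with h | h
          · omega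
          · exact hn1 h
      · intro s hs
        rw [mem_filter] at hs
        exact insert_erase hs.2.2
      · intro t ht
        rw [mem_filter] at ht
        exact erase_insert (fun h => by have := ht.2.1 0 h; omega)
      · intro s hs
        rw [mem_filter] at hs
        have h0 : 0 ∈ s := hs.2.2
        have hc : s.card = (s.erase 0).card + 1 := by
          have := card_erase_of_mem h0
          have hpos : 0 < s.card := card_pos.2 ⟨0, h0⟩
          omega
        rw [hc, pow_succ]
        ring
    rw [key, Finset.sum_neg_distrib]
  rw [SsumN, ← Finset.sum_filter_add_sum_filter_not
    ((range n).powerset.filter (CIndepN n)) (fun s => 0 ∈ s), Finset.filter_filter,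
    Finset.filter_filter]
  have h1 : (fun s => CIndepN n s ∧ 0 ∈ s) = (fun (s : Finset ℕ) => CIndepN n s ∧ 0 ∈ s) := rfl
  rw [P2, P1]
  ring

lemma ssumN_ne (n : ℕ) (hn : 3 ≤ n) : SsumN n ≠ 0 := by
  rw [ssumN_eq n hn, (psumN_pv (n - 1)).1, (psumN_pv (n - 3)).1]
  have e1 : (n - 1) % 6 = (n % 6 + 5) % 6 := by omega
  have e3 : (n - 3) % 6 = (n % 6 + 3) % 6 := by omega
  rw [e1, e3]
  rcases (by omega : n % 6 = 0 ∨ n % 6 = 1 ∨ n % 6 = 2 ∨ n % 6 = 3 ∨ n % 6 = 4 ∨ n % 6 = 5)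
    with h | h | h | h | h | h <;> rw [h] <;> decide

lemma modHelper {n x : ℕ} (hn : 0 < n) (hx : x < 2 * n) :
    (x < n ∧ x % n = x) ∨ (n ≤ x ∧ x % n = x - n) := by
  rcases lt_or_ge x n with h | h
  · exact Or.inl ⟨h, Nat.mod_eq_of_lt h⟩
  · refine Or.inr ⟨h, ?_⟩
    rw [Nat.mod_eq_sub_mod h, Nat.mod_eq_of_lt (by omega)]

lemma cycle_adj_iff {m : ℕ} (u v : Fin (m + 3)) :
    (SimpleGraph.cycleGraph (m + 3)).Adj u v ↔
      (u.val + 1 = v.val ∨ v.val + 1 = u.val ∨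
        (u.val = 0 ∧ v.val = m + 2) ∨ (v.val = 0 ∧ u.val = m + 2)) := by
  have hu := u.isLt
  have hv := v.isLt
  rw [show (SimpleGraph.cycleGraph (m + 3)).Adj u v ↔ (u - v = 1 ∨ v - u = 1) from
    SimpleGraph.cycleGraph_adj (n := m + 1)]
  have e : ∀ a b : Fin (m + 3), (a - b = 1) ↔ ((m + 3 - b.val + a.val) % (m + 3) = 1) := by
    intro a b
    rw [Fin.ext_iff, Fin.sub_def]
    simp
  rw [e u v, e v u]
  have hm1 := modHelper (n := m + 3) (x := m + 3 - v.val + u.val) (by omega) (by omega)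
  have hm2 := modHelper (n := m + 3) (x := m + 3 - u.val + v.val) (by omega) (by omega)
  have hb1 : (m + 3 - ↑v + ↑u) % (m + 3) < m + 3 := Nat.mod_lt _ (by omega)
  have hb2 : (m + 3 - ↑u + ↑v) % (m + 3) < m + 3 := Nat.mod_lt _ (by omega)
  rcases hm1 with ⟨hl1, h1⟩ | ⟨hl1, h1⟩ <;> rcases hm2 with ⟨hl2, h2⟩ | ⟨hl2, h2⟩ <;>
    rw [h1] at hb1 ⊢ <;> rw [h2] at hb2 ⊢ <;> omega


lemma indep_iff_cIndepN {m : ℕ} (s : Finset (Fin (m + 3))) :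
    IsIndep (SimpleGraph.cycleGraph (m + 3)) s ↔ CIndepN (m + 3) (s.map Fin.valEmbedding) := by
  have hmem : ∀ a : ℕ, a ∈ s.map Fin.valEmbedding ↔ ∃ u ∈ s, (u : ℕ) = a := by
    intro a; simp [Finset.mem_map, Fin.valEmbedding_apply]
  constructor
  · intro h
    constructor
    · intro a ha hb
      obtain ⟨u, hu, rfl⟩ := (hmem a).1 ha
      obtain ⟨v, hv, hva⟩ := (hmem _).1 hb
      exact h u hu v hv ((cycle_adj_iff u v).2 (Or.inl hva.symm))
    · rintro ⟨h0, h1⟩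
      obtain ⟨u, hu, hu0⟩ := (hmem 0).1 h0
      obtain ⟨v, hv, hv1⟩ := (hmem _).1 h1
      have hval : (v : ℕ) = m + 2 := by omega
      exact h u hu v hv ((cycle_adj_iff u v).2 (Or.inr (Or.inr (Or.inl ⟨hu0, hval⟩))))
  · rintro ⟨hP, h01⟩ u hu v hv hadj
    rcases (cycle_adj_iff u v).1 hadj with h | h | ⟨h, h'⟩ | ⟨h, h'⟩
    · exact hP (u : ℕ) ((hmem _).2 ⟨u, hu, rfl⟩) (h ▸ (hmem _).2 ⟨v, hv, rfl⟩)
    · exact hP (v : ℕ) ((hmem _).2 ⟨v, hv, rfl⟩) (h ▸ (hmem _).2 ⟨u, hu, rfl⟩)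
    · exact h01 ⟨(hmem _).2 ⟨u, hu, h⟩, (hmem _).2 ⟨v, hv, by omega⟩⟩
    · exact h01 ⟨(hmem _).2 ⟨v, hv, h⟩, (hmem _).2 ⟨u, hu, by omega⟩⟩

lemma indep_card_le {m : ℕ} (s : Finset (Fin (m + 3)))
    (hs : IsIndep (SimpleGraph.cycleGraph (m + 3)) s) : s.card ≤ (m + 3) / 2 := by
  classical
  have hdisj : Disjoint s (s.image (· + (1 : Fin (m + 3)))) := by
    rw [Finset.disjoint_left]
    intro v hv hv'
    obtain ⟨u, hu, rfl⟩ := Finset.mem_image.1 hv'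
    refine hs u hu _ hv ?_
    rw [show (SimpleGraph.cycleGraph (m + 3)).Adj u (u + 1) ↔ (u - (u+1) = 1 ∨ (u+1) - u = 1) from
      SimpleGraph.cycleGraph_adj (n := m + 1)]
    right
    simp
  have hcard : (s.image (· + (1 : Fin (m + 3)))).card = s.card :=
    Finset.card_image_of_injective _ (add_left_injective _)
  have := Finset.card_union_of_disjoint hdisj
  have hle : (s ∪ s.image (· + (1 : Fin (m + 3)))).card ≤ m + 3 := by
    have := Finset.card_le_univ (s ∪ s.image (· + (1 : Fin (m + 3))))
    simpa using this
  omega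

open scoped Classical in
lemma sum_transfer (m : ℕ) :
    ∑ s ∈ Finset.univ.filter (fun s : Finset (Fin (m + 3)) =>
        IsIndep (SimpleGraph.cycleGraph (m + 3)) s), (-1 : ℤ) ^ s.card = SsumN (m + 3) := by
  classical
  rw [SsumN]
  refine Finset.sum_bij (fun s _ => s.map Fin.valEmbedding) ?_ ?_ ?_ ?_
  · intro s hs
    rw [Finset.mem_filter] at hs
    refine Finset.mem_filter.2 ⟨Finset.mem_powerset.2 ?_, (indep_iff_cIndepN s).1 hs.2⟩
    intro a ha
    obtain ⟨u, _, rfl⟩ := Finset.mem_map.1 ha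
    exact Finset.mem_range.2 u.isLt
  · intro s1 _ s2 _ he
    exact Finset.map_injective _ he
  · intro u hu
    rw [Finset.mem_filter, Finset.mem_powerset] at hu
    have hlt : ∀ a ∈ u, a < m + 3 := fun a ha => Finset.mem_range.1 (hu.1 ha)
    have hmapeq : (u.attachFin hlt).map Fin.valEmbedding = u := by
      ext a
      simp only [Finset.mem_map, Finset.mem_attachFin, Fin.valEmbedding_apply]
      constructor
      · rintro ⟨b, hb, rfl⟩
        exact hb
      · intro ha
        exact ⟨⟨a, hlt a ha⟩, ha, rfl⟩
    refine ⟨u.attachFin hlt, Finset.mem_filter.2 ⟨Finset.mem_univ _, ?_⟩, hmapeq⟩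
    rw [indep_iff_cIndepN, hmapeq]
    exact hu.2
  · intro s _
    rw [Finset.card_map]

lemma walk_support_eq {V : Type*} {G : SimpleGraph V} {u v : V} (p : G.Walk u v) :
    p.support = (List.range (p.length + 1)).map p.getVert := by
  induction p with
  | nil => simp [SimpleGraph.Walk.getVert]
  | cons h q ih =>
    rw [SimpleGraph.Walk.support_cons, ih, SimpleGraph.Walk.length_cons,
      show List.range (q.length + 1 + 1) = 0 :: (List.range (q.length + 1)).map Nat.succ from
        List.range_succ_eq_map, List.map_cons, List.map_map]
    rfl

lemma list_range_map_sum {M : Type*} [AddCommMonoid M] (n : ℕ) (f : ℕ → M) :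
    ((List.range n).map f).sum = ∑ i ∈ Finset.range n, f i := by
  induction n with
  | zero => simp
  | succ n ih =>
    rw [List.range_succ, List.map_append, List.sum_append, Finset.sum_range_succ, ih]
    simp

lemma ham_sum_eq_zero {V : Type*} [Fintype V] [DecidableEq V] {G : SimpleGraph V} (f : V → ℤ)
    (hf1 : ∀ v, f v = 1 ∨ f v = -1) (hf : ∀ u v, G.Adj u v → f v = -f u)
    {a : V} {p : G.Walk a a} (hp : p.IsHamiltonianCycle) : ∑ v, f v = 0 := by
  have key : ∀ i, i ≤ p.length → f (p.getVert i) = (-1) ^ i * f a := by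
    intro i
    induction i with
    | zero => intro _; simp
    | succ i ih =>
      intro hi
      have h1 := hf _ _ (p.adj_getVert_succ (i := i) (by omega))
      rw [h1, ih (by omega), pow_succ]
      ring
  have hNeven : Even p.length := by
    have h1 : f (p.getVert p.length) = (-1) ^ p.length * f a := key _ le_rfl
    rw [SimpleGraph.Walk.getVert_length] at h1
    rcases Nat.even_or_odd p.length with he | ho
    · exact he
    · rw [ho.neg_one_pow] at h1
      rcases hf1 a with h | h <;> rw [h] at h1 <;> norm_num at h1
  have hnodup : p.support.tail.Nodup := hp.isCycle.support_nodup
  have huniv : p.support.tail.toFinset = Finset.univ := by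
    rw [← SimpleGraph.Walk.support_tail_of_not_nil p hp.isCycle.not_nil]
    exact hp.isHamiltonian_tail.support_toFinset
  have hsum : ∑ v, f v = (p.support.tail.map f).sum := by
    rw [← huniv]
    exact List.sum_toFinset f hnodup
  have htail : p.support.tail = (List.range p.length).map (fun i => p.getVert (i + 1)) := by
    rw [walk_support_eq p, List.range_succ_eq_map, List.map_cons, List.tail_cons, List.map_map]
    rfl
  rw [htail, List.map_map, list_range_map_sum] at hsum
  rw [hsum]
  have hcongr : ∀ i ∈ Finset.range p.length,
      (f ∘ fun i => p.getVert (i + 1)) i = -((-1 : ℤ) ^ i * f a) := by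
    intro i hi
    have := key (i + 1) (Nat.succ_le_of_lt (Finset.mem_range.1 hi))
    simp only [Function.comp_apply]
    rw [this, pow_succ]
    ring
  rw [Finset.sum_congr rfl hcongr, Finset.sum_neg_distrib, ← Finset.sum_mul,
    neg_one_geom_sum, if_pos hNeven]
  ring

theorem indepGraph_cycle_not_hamiltonian (n : ℕ) (hn : 3 ≤ n) :
    ¬ (indepGraph (SimpleGraph.cycleGraph n) (n / 2)).IsHamiltonian := by
  classical
  obtain ⟨m, rfl⟩ : ∃ m, n = m + 3 := ⟨n - 3, by omega⟩
  intro hham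
  set G := SimpleGraph.cycleGraph (m + 3) with hG
  have hempty : IsIndep G (∅ : Finset (Fin (m + 3))) := by
    intro u hu
    simp at hu
  have hsingle : IsIndep G {(0 : Fin (m + 3))} := by
    intro u hu v hv hadj
    rw [Finset.mem_singleton] at hu hv
    subst hu; subst hv
    exact G.loopless.irrefl _ hadj
  have hnt : Nontrivial {s : Finset (Fin (m + 3)) // IsIndep G s ∧ s.card ≤ (m + 3) / 2} := by
    refine ⟨⟨∅, hempty, by simp⟩, ⟨{0}, hsingle, by simp; omega⟩, ?_⟩
    intro h
    have := congrArg Subtype.val h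
    exact Finset.singleton_ne_empty 0 this.symm
  obtain ⟨a, p, hp⟩ := hham (Fintype.one_lt_card.ne')
  have hsum0 : ∑ v : {s : Finset (Fin (m + 3)) // IsIndep G s ∧ s.card ≤ (m + 3) / 2},
      ((-1 : ℤ) ^ (v.1.card)) = 0 := by
    refine ham_sum_eq_zero _ ?_ ?_ hp
    · intro v
      rcases Nat.even_or_odd v.1.card with h | h
      · exact Or.inl h.neg_one_pow
      · exact Or.inr h.neg_one_pow
    · intro u v h
      rcases h with ⟨_, hc⟩ | ⟨_, hc⟩
      · rw [hc, pow_succ]; ring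
      · rw [hc, pow_succ]; ring
  have hmem : ∀ s : Finset (Fin (m + 3)),
      s ∈ Finset.univ.filter (fun s => IsIndep G s) ↔
        (IsIndep G s ∧ s.card ≤ (m + 3) / 2) := by
    intro s
    simp only [Finset.mem_filter, Finset.mem_univ, true_and]
    exact ⟨fun h => ⟨h, indep_card_le s h⟩, fun h => h.1⟩
  have hsum : ∑ v : {s : Finset (Fin (m + 3)) // IsIndep G s ∧ s.card ≤ (m + 3) / 2},
      ((-1 : ℤ) ^ (v.1.card)) = SsumN (m + 3) := by
    rw [← Finset.sum_subtype (Finset.univ.filter (fun s => IsIndep G s)) hmem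
      (fun s => (-1 : ℤ) ^ s.card)]
    exact sum_transfer m
  rw [hsum] at hsum0
  exact ssumN_ne (m + 3) (by omega) hsum0
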